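/- Let G be a connected submodular hypergraph, and for x ∈ ℝ^N and p ≥ 1 define μ_p^+(x) = Σ_{v : x_v > 0} μ_v |x_v|^{p−1}, μ⁰(x) = Σ_{v : x_v = 0} μ_v, and μ_p^−(x) = Σ_{v : x_v < 0} μ_v |x_v|^{p−1}. Then for any nonconstant eigenvector x of △_p: if p > 1 then μ_p^+(x) − μ_p^−(x) = 0, and if p = 1 then |μ₁^+(x) − μ₁^−(x)| ≤ μ⁰(x). Consequently, for every p ≥ 1, the value c = 0 minimizes c ↦ ‖x − c·𝟙‖_{ℓp,μ}^p over ℝ. -/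

import Mathlib

open scoped BigOperators
open Finset

noncomputable section

/-- A set function on the ground set `Fin N` is submodular:
`F(S ∪ T) + F(S ∩ T) ≤ F(S) + F(T)` for all `S, T`. -/
def Submodular {N : ℕ} (F : Finset (Fin N) → ℝ) : Prop :=
  ∀ S T : Finset (Fin N), F (S ∪ T) + F (S ∩ T) ≤ F S + F T

/-- The Lovász extension of a set function, written in its (tie-breaking independent)
level-set integral form, which agrees with the usual sorted-sum definition
`f(x) = Σ_{j=1}^{N-1} F({i_1,…,i_j})(x_{i_j} − x_{i_{j+1}})` for a nonincreasing
ordering `x_{i_1} ≥ … ≥ x_{i_N}`. -/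
def lovasz {N : ℕ} (F : Finset (Fin N) → ℝ) (x : Fin N → ℝ) : ℝ :=
  ∫ t in (⨅ v, x v)..(⨆ v, x v), F (Finset.univ.filter fun v => t < x v)

/-- The inner product `⟨y, x⟩ = Σ_v y_v x_v`. -/
def dotp {N : ℕ} (y x : Fin N → ℝ) : ℝ := ∑ v, y v * x v

/-- The set of subgradients of `f : ℝ^N → ℝ` at `x`. -/
def subgradients {N : ℕ} (f : (Fin N → ℝ) → ℝ) (x : Fin N → ℝ) : Set (Fin N → ℝ) :=
  {y | ∀ x', dotp y (x' - x) ≤ f x' - f x}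

/-- The base polytope of a set function: `y(S) ≤ F(S)` for all `S ⊆ V` and `y(V) = 0`. -/
def basePolytope {N : ℕ} (F : Finset (Fin N) → ℝ) : Set (Fin N → ℝ) :=
  {y | (∀ S : Finset (Fin N), ∑ v ∈ S, y v ≤ F S) ∧ ∑ v, y v = 0}

/-- The sign function (`sgn 0 = 0`). -/
def sgn (a : ℝ) : ℝ := if 0 < a then 1 else if a < 0 then -1 else 0

/-- A vector is nonconstant. -/
def Nonconstant {N : ℕ} (x : Fin N → ℝ) : Prop := ∃ u v, x u ≠ x v

/-- Restriction of a vector to a subset of vertices (zero outside that subset). -/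
def restrictVec {N : ℕ} (x : Fin N → ℝ) (C : Finset (Fin N)) : Fin N → ℝ :=
  fun v => if v ∈ C then x v else 0

/-- Euclidean norm on `ℝ^N`. -/
def l2norm {N : ℕ} (z : Fin N → ℝ) : ℝ := Real.sqrt (∑ v, z v ^ 2)

/-- Supremum norm on `ℝ^N`. -/
def linfNorm {N : ℕ} (z : Fin N → ℝ) : ℝ := ⨆ v, |z v|

/-- A submodular hypergraph `G = (V, E, w, μ)` on `V = Fin N`: hyperedges `E`,
positive vertex weights `μ`, and for each hyperedge `e ∈ E` a scalar `θ_e > 0`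
together with a normalized symmetric submodular weight `w_e : 2^e → [0,1]`
(extended to all of `2^V` by `w_e(S) = w_e(S ∩ e)`). -/
structure SubmodularHypergraph (N : ℕ) where
  E : Finset (Finset (Fin N))
  μ : Fin N → ℝ
  μ_pos : ∀ v, 0 < μ v
  θ : Finset (Fin N) → ℝ
  θ_pos : ∀ e ∈ E, 0 < θ e
  w : Finset (Fin N) → Finset (Fin N) → ℝ
  w_inter : ∀ e ∈ E, ∀ S, w e S = w e (S ∩ e)
  w_submodular : ∀ e ∈ E, Submodular (w e)
  w_nonneg : ∀ e ∈ E, ∀ S, 0 ≤ w e S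
  w_le_one : ∀ e ∈ E, ∀ S, w e S ≤ 1
  w_empty : ∀ e ∈ E, w e ∅ = 0
  w_normalized : ∀ e ∈ E, ∃ S ⊆ e, w e S = 1
  w_symm : ∀ e ∈ E, ∀ S ⊆ e, w e S = w e (e \ S)

namespace SubmodularHypergraph

variable {N : ℕ} (G : SubmodularHypergraph N)

/-- `vol(S) = Σ_{v ∈ S} μ_v`. -/
def vol (S : Finset (Fin N)) : ℝ := ∑ v ∈ S, G.μ v

/-- `vol(∂S) = Σ_{e ∈ E} θ_e w_e(S)`. -/
def volB (S : Finset (Fin N)) : ℝ := ∑ e ∈ G.E, G.θ e * G.w e S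

/-- The Lovász extension `f_e` of the hyperedge weight `w_e`. -/
def fe (e : Finset (Fin N)) (x : Fin N → ℝ) : ℝ := lovasz (G.w e) x

/-- `Q_p(x) = Σ_{e ∈ E} θ_e f_e(x)^p`. -/
def Q (p : ℝ) (x : Fin N → ℝ) : ℝ := ∑ e ∈ G.E, G.θ e * G.fe e x ^ p

/-- `‖x‖_{ℓp,μ}^p = Σ_v μ_v |x_v|^p`. -/
def normLpPow (p : ℝ) (x : Fin N → ℝ) : ℝ := ∑ v, G.μ v * |x v| ^ p

/-- `G` is connected: `vol(∂S) > 0` for all nonempty proper `S ⊂ V`. -/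
def Connected : Prop :=
  ∀ S : Finset (Fin N), S.Nonempty → S ≠ Finset.univ → 0 < G.volB S

/-- Vertices `u, v` are connected in `G`: every `S` with `u ∈ S`, `v ∉ S` has
`vol(∂S) > 0`. -/
def VertConnected (u v : Fin N) : Prop :=
  ∀ S : Finset (Fin N), u ∈ S → v ∉ S → 0 < G.volB S

/-- The conductance `c(S) = vol(∂S) / min{vol(S), vol(V∖S)}`. -/
def conductance (S : Finset (Fin N)) : ℝ := G.volB S / min (G.vol S) (G.vol Sᶜ)

/-- The degree `d_v = Σ_{e ∈ E : v ∈ e} θ_e`. -/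
def degree (v : Fin N) : ℝ := ∑ e ∈ G.E.filter (fun e => v ∈ e), G.θ e

/-- `τ = max_v d_v / μ_v`. -/
def tau : ℝ := ⨆ v, G.degree v / G.μ v

/-- `G` is homogeneous: `w_e(S) = 1` for every `S ∈ 2^e ∖ {∅, e}`. -/
def Homogeneous : Prop :=
  ∀ e ∈ G.E, ∀ S ⊆ e, S ≠ ∅ → S ≠ e → G.w e S = 1

/-- `(λ, x)` is an eigenpair of the `p`-Laplacian `△_p` (for `p > 1` and for `p = 1`). -/
def IsEigenpair (p lam : ℝ) (x : Fin N → ℝ) : Prop :=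
  x ≠ 0 ∧
  ∃ y : Finset (Fin N) → Fin N → ℝ,
    (∀ e ∈ G.E, y e ∈ basePolytope (G.w e) ∧
        ∀ z ∈ basePolytope (G.w e), dotp z x ≤ dotp (y e) x) ∧
    (if 1 < p then
        ∀ v, ∑ e ∈ G.E, G.θ e * G.fe e x ^ (p - 1) * y e v
              = lam * G.μ v * (|x v| ^ (p - 1) * sgn (x v))
      else
        (∀ v, x v ≠ 0 → ∑ e ∈ G.E, G.θ e * y e v = lam * G.μ v * sgn (x v)) ∧
        (∀ v, x v = 0 → |∑ e ∈ G.E, G.θ e * y e v| ≤ lam * G.μ v))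

/-- Vertices `u, v` are connected inside the induced sub-hypergraph `G[W]`
(the boundary volume in `G[W]` of `S ⊆ W` equals `Σ_{e ∈ E} θ_e w_e(S)`). -/
def VertConnectedIn (W : Finset (Fin N)) (u v : Fin N) : Prop :=
  u = v ∨ ∀ S ⊆ W, u ∈ S → v ∉ S → 0 < G.volB S

/-- `C` is (the vertex set of) a connected component of the induced sub-hypergraph `G[W]`. -/
def IsComponent (W C : Finset (Fin N)) : Prop :=
  C ⊆ W ∧ C.Nonempty ∧
    (∀ u ∈ C, ∀ v ∈ C, G.VertConnectedIn W u v) ∧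
    (∀ u ∈ C, ∀ v ∈ W, G.VertConnectedIn W u v → v ∈ C)

end SubmodularHypergraph

def posSupp {N : ℕ} (x : Fin N → ℝ) : Finset (Fin N) := Finset.univ.filter fun v => 0 < x v
def negSupp {N : ℕ} (x : Fin N → ℝ) : Finset (Fin N) := Finset.univ.filter fun v => x v < 0
def nonnegSupp {N : ℕ} (x : Fin N → ℝ) : Finset (Fin N) := Finset.univ.filter fun v => 0 ≤ x v
def nonposSupp {N : ℕ} (x : Fin N → ℝ) : Finset (Fin N) := Finset.univ.filter fun v => x v ≤ 0

namespace SubmodularHypergraph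

variable {N : ℕ} (G : SubmodularHypergraph N)

/-- The number of strong nodal domains of `x` (positive ones plus negative ones). -/
def strongNodalCount (x : Fin N → ℝ) : ℕ :=
  {C : Finset (Fin N) | G.IsComponent (posSupp x) C}.ncard +
  {C : Finset (Fin N) | G.IsComponent (negSupp x) C}.ncard

/-- The number of weak nodal domains of `x` (positive ones plus negative ones). -/
def weakNodalCount (x : Fin N → ℝ) : ℕ :=
  {C : Finset (Fin N) | G.IsComponent (nonnegSupp x) C}.ncard +
  {C : Finset (Fin N) | G.IsComponent (nonposSupp x) C}.ncard

/-- The collection of strong nodal domains of `x`. -/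
def strongNodalDomains (x : Fin N → ℝ) : Set (Finset (Fin N)) :=
  {C | G.IsComponent (posSupp x) C ∨ G.IsComponent (negSupp x) C}

/-- The collection of weak nodal domains of `x`. -/
def weakNodalDomains (x : Fin N → ℝ) : Set (Finset (Fin N)) :=
  {C | G.IsComponent (nonnegSupp x) C ∨ G.IsComponent (nonposSupp x) C}

/-- `Z_{p,μ}(x) = min_c ‖x − c·𝟙‖_{ℓp,μ}^p`. -/
def Z (p : ℝ) (x : Fin N → ℝ) : ℝ := ⨅ c : ℝ, ∑ v, G.μ v * |x v - c| ^ p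

/-- `𝓡_p(x) = Q_p(x) / Z_{p,μ}(x)`. -/
def Rq (p : ℝ) (x : Fin N → ℝ) : ℝ := G.Q p x / G.Z p x

/-- The `k`-way Cheeger constant `h_k`. -/
def cheegerConst (k : ℕ) : ℝ :=
  sInf {c : ℝ | ∃ S : Fin k → Finset (Fin N),
    (∀ i, (S i).Nonempty) ∧ (∀ i j, i ≠ j → Disjoint (S i) (S j)) ∧
    c = ⨆ i, G.conductance (S i)}

end SubmodularHypergraph

/-- There is an odd continuous map `h : A → ℝ^k ∖ {0}`. -/
def genusLE {N : ℕ} (A : Set (Fin N → ℝ)) (k : ℕ) : Prop :=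
  ∃ h : (Fin N → ℝ) → (Fin k → ℝ),
    ContinuousOn h A ∧ (∀ x ∈ A, h (-x) = -h x) ∧ ∀ x ∈ A, h x ≠ 0

/-- The Krasnoselski genus of a set. -/
def genus {N : ℕ} (A : Set (Fin N → ℝ)) : ℕ∞ :=
  sInf ((fun n : ℕ => (n : ℕ∞)) '' {n | genusLE A n})

namespace SubmodularHypergraph

variable {N : ℕ} (G : SubmodularHypergraph N)

/-- The `k`-th variational eigenvalue `λ_k^{(p)}` of `△_p`:
`min` over closed symmetric `A ⊆ S_{p,μ}` with `γ(A) ≥ k` of `max_{x ∈ A} Q_p(x)`. -/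
def varEigen (p : ℝ) (k : ℕ) : ℝ :=
  sInf ((fun A : Set (Fin N → ℝ) => sSup (G.Q p '' A)) ''
    {A | IsClosed A ∧ (∀ x ∈ A, -x ∈ A) ∧
         A ⊆ {x | G.normLpPow p x = 1} ∧ (k : ℕ∞) ≤ genus A})

end SubmodularHypergraph

/-! ### Auxiliary lemmas -/

section AuxLemmas

open MeasureTheory

lemma sgn_mul_self (t : ℝ) : sgn t * t = |t| := by
  unfold sgn
  rcases lt_trichotomy 0 t with h | h | h
  · rw [if_pos h, abs_of_pos h, one_mul]
  · simp [← h]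
  · rw [if_neg (by linarith), if_pos h, abs_of_neg h]; ring

lemma sgn_mul_le_abs (t s : ℝ) : sgn t * s ≤ |s| := by
  unfold sgn
  rcases lt_trichotomy 0 t with h | h | h
  · rw [if_pos h, one_mul]; exact le_abs_self s
  · simp [← h, abs_nonneg]
  · rw [if_neg (by linarith), if_pos h, neg_one_mul]; exact neg_le_abs s

lemma bern_pos {p t : ℝ} (c : ℝ) (hp : 1 < p) (ht : 0 < t) :
    t ^ p - p * c * t ^ (p - 1) ≤ |t - c| ^ p := by
  have hs : -1 ≤ (|t - c| - t) / t := by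
    rw [le_div_iff₀ ht]; nlinarith [abs_nonneg (t - c)]
  have hb := one_add_mul_self_le_rpow_one_add hs hp.le
  have h1 : 1 + (|t - c| - t) / t = |t - c| / t := by field_simp; ring
  rw [h1, Real.div_rpow (abs_nonneg _) ht.le] at hb
  have htp : 0 < t ^ p := Real.rpow_pos_of_pos ht p
  have h2 : t ^ p * (1 + p * ((|t - c| - t) / t)) ≤ |t - c| ^ p := by
    calc t ^ p * (1 + p * ((|t - c| - t) / t)) ≤ t ^ p * (|t - c| ^ p / t ^ p) :=
          mul_le_mul_of_nonneg_left hb htp.le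
      _ = |t - c| ^ p := by field_simp
  have h3 : t ^ p = t ^ (p - 1) * t := by
    rw [← Real.rpow_add_one ht.ne' (p - 1)]; ring_nf
  have h4 : t ^ p * (1 + p * ((|t - c| - t) / t)) = t ^ p + p * t ^ (p - 1) * (|t - c| - t) := by
    rw [h3]; field_simp
  have h5 : 0 ≤ p * t ^ (p - 1) * (|t - c| - (t - c)) := by
    have := le_abs_self (t - c)
    have hnn : (0:ℝ) ≤ t ^ (p - 1) := Real.rpow_nonneg ht.le _
    exact mul_nonneg (mul_nonneg (by linarith) hnn) (by linarith)
  nlinarith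

lemma bern {p : ℝ} (hp : 1 < p) (t c : ℝ) :
    |t| ^ p - p * c * (|t| ^ (p - 1) * sgn t) ≤ |t - c| ^ p := by
  rcases lt_trichotomy 0 t with ht | ht | ht
  · have h := bern_pos c hp ht
    rw [abs_of_pos ht]
    have hsgn : sgn t = 1 := if_pos ht
    rw [hsgn, mul_one]; exact h
  · have h0 : t = 0 := ht.symm
    subst h0
    have hsgn : sgn 0 = (0:ℝ) := by unfold sgn; simp
    rw [hsgn, abs_zero, Real.zero_rpow (by linarith : p ≠ 0)]
    simp [Real.rpow_nonneg (abs_nonneg _)]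
  · have h := bern_pos (-c) hp (by linarith : 0 < -t)
    have hsgn : sgn t = -1 := by unfold sgn; rw [if_neg (by linarith), if_pos ht]
    rw [abs_of_neg ht, hsgn]
    have habs : |-t - -c| = |t - c| := by rw [show -t - -c = -(t - c) by ring, abs_neg]
    rw [habs] at h
    calc (-t) ^ p - p * c * ((-t) ^ (p - 1) * (-1))
        = (-t) ^ p - p * (-c) * (-t) ^ (p - 1) := by ring
      _ ≤ |t - c| ^ p := h

lemma greedy {N : ℕ} (F : Finset (Fin N) → ℝ) (hsub : Submodular F) (h0 : F ∅ = 0)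
    (hnn : ∀ T, 0 ≤ F T) (x : Fin N → ℝ) (S : Finset (Fin N)) (M a : ℝ)
    (hxS : ∀ v ∈ S, x v = M) (hxS' : ∀ v, v ∉ S → x v ≤ a) (haM : a ≤ M)
    (e : Finset (Fin N)) :
    ∃ z : Fin N → ℝ,
      (∀ v, v ∉ e → z v = 0) ∧ (∀ T ⊆ e, ∑ v ∈ T, z v ≤ F T) ∧ (∑ v ∈ e, z v = F e) ∧
      ∀ m : ℝ, (∀ v ∈ e, m ≤ x v) →
        (if (S ∩ e).Nonempty ∧ (e \ S).Nonempty then F (S ∩ e) * (M - a) else 0) + F e * m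
          ≤ ∑ v, z v * x v := by
  classical
  induction e using Finset.strongInduction with
  | _ e IH =>
  rcases e.eq_empty_or_nonempty with rfl | he
  · refine ⟨0, fun v _ => rfl, ?_, by simp [h0], ?_⟩
    · intro T hT
      rw [Finset.subset_empty.mp hT]
      simp [h0]
    · intro m hm
      simp [h0]
  · obtain ⟨u, hu, hmin⟩ := e.exists_min_image x he
    set e' := e.erase u with he'def
    have hss : e' ⊂ e := Finset.erase_ssubset hu
    obtain ⟨z', hz'0, hz'le, hz'sum, hz'val⟩ := IH e' hss
    have hz'u : z' u = 0 := hz'0 u (Finset.notMem_erase u e)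
    refine ⟨fun v => if v = u then F e - F e' else z' v, ?_, ?_, ?_, ?_⟩
    · intro v hv
      show (if v = u then F e - F e' else z' v) = 0
      rw [if_neg (fun h => hv (by rw [h]; exact hu))]
      exact hz'0 v (fun h => hv (Finset.mem_of_mem_erase h))
    · -- subsets
      intro T hT
      by_cases huT : u ∈ T
      · have hTe : T.erase u ⊆ e' := fun v hv =>
          Finset.mem_erase.mpr ⟨(Finset.mem_erase.mp hv).1, hT (Finset.mem_erase.mp hv).2⟩
        have hsum : ∑ v ∈ T, (if v = u then F e - F e' else z' v)
            = (F e - F e') + ∑ v ∈ T.erase u, z' v := by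
          rw [← Finset.add_sum_erase T _ huT, if_pos rfl]
          congr 1
          exact Finset.sum_congr rfl fun v hv => if_neg (Finset.mem_erase.mp hv).1
        rw [hsum]
        have h1 : ∑ v ∈ T.erase u, z' v ≤ F (T.erase u) := hz'le _ hTe
        have h2 := hsub T e'
        have hTu : T ∪ e' = e := by
          apply Finset.Subset.antisymm
          · exact Finset.union_subset hT (Finset.erase_subset u e)
          · intro v hv
            by_cases hvu : v = u
            · exact Finset.mem_union_left _ (hvu ▸ huT)
            · exact Finset.mem_union_right _ (Finset.mem_erase.mpr ⟨hvu, hv⟩)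
        have hTi : T ∩ e' = T.erase u := by
          ext v
          simp only [Finset.mem_inter, Finset.mem_erase, he'def]
          constructor
          · rintro ⟨h1, h2, _⟩; exact ⟨h2, h1⟩
          · rintro ⟨h1, h2⟩; exact ⟨h2, h1, hT h2⟩
        rw [hTu, hTi] at h2
        linarith
      · have hTe : T ⊆ e' := fun v hv =>
          Finset.mem_erase.mpr ⟨fun h => huT (by rw [← h]; exact hv), hT hv⟩
        have hsum : ∑ v ∈ T, (if v = u then F e - F e' else z' v) = ∑ v ∈ T, z' v :=
          Finset.sum_congr rfl fun v hv => if_neg (fun h => huT (by rw [← h]; exact hv))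
        rw [hsum]
        exact hz'le _ hTe
    · -- total sum
      rw [← Finset.add_sum_erase e _ hu, if_pos rfl]
      have : ∑ v ∈ e.erase u, (if v = u then F e - F e' else z' v) = ∑ v ∈ e', z' v :=
        Finset.sum_congr rfl fun v hv => if_neg (Finset.mem_erase.mp hv).1
      rw [this, hz'sum]
      ring
    · -- value bound
      intro m hm
      have hxu : x u ≤ M := by
        by_cases h : u ∈ S
        · exact le_of_eq (hxS u h)
        · exact le_trans (hxS' u h) haM
      have hmxu : m ≤ x u := hm u hu
      have hsum : ∑ v, (if v = u then F e - F e' else z' v) * x v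
          = (∑ v, z' v * x v) + (F e - F e') * x u := by
        have : ∀ v : Fin N, (if v = u then F e - F e' else z' v) * x v
            = z' v * x v + (if v = u then (F e - F e') * x u else 0) := by
          intro v
          by_cases h : v = u
          · subst h; rw [if_pos rfl, if_pos rfl, hz'u]; ring
          · rw [if_neg h, if_neg h]; ring
        rw [Finset.sum_congr rfl fun v _ => this v, Finset.sum_add_distrib,
          Finset.sum_ite_eq' Finset.univ u (fun _ => (F e - F e') * x u)]
        simp
      rw [hsum]
      by_cases hcase : (e' \ S).Nonempty
      · -- case B
        have hval := hz'val (x u) (fun v hv => hmin v (Finset.mem_of_mem_erase hv))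
        have hcross : (if (S ∩ e).Nonempty ∧ (e \ S).Nonempty then F (S ∩ e) * (M - a) else 0)
            ≤ (if (S ∩ e').Nonempty ∧ (e' \ S).Nonempty then F (S ∩ e') * (M - a) else 0) := by
          by_cases hc : (S ∩ e).Nonempty ∧ (e \ S).Nonempty
          · rw [if_pos hc]
            by_cases huS : u ∈ S
            · -- then M = a
              obtain ⟨w, hw⟩ := hcase
              have hwe : w ∈ e := Finset.mem_of_mem_erase (Finset.mem_sdiff.mp hw).1
              have hwS : w ∉ S := (Finset.mem_sdiff.mp hw).2
              have : M ≤ a := by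
                have h1 := hmin w hwe
                have h2 := hxS u huS
                have h3 := hxS' w hwS
                linarith
              have hMa : M - a = 0 := by linarith
              rw [hMa, mul_zero]
              split <;> simp [hMa]
            · have hSe : S ∩ e' = S ∩ e := by
                ext v
                simp only [Finset.mem_inter, he'def, Finset.mem_erase]
                constructor
                · rintro ⟨h1, _, h2⟩; exact ⟨h1, h2⟩
                · rintro ⟨h1, h2⟩; exact ⟨h1, fun h => huS (h ▸ h1), h2⟩
              rw [if_pos ⟨hSe ▸ hc.1, hcase⟩, hSe]
          · rw [if_neg hc]
            split
            · exact mul_nonneg (hnn _) (by linarith)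
            · exact le_refl 0
        have hFe : 0 ≤ F e := hnn e
        nlinarith [hval, hcross, mul_le_mul_of_nonneg_left hmxu hFe]
      · -- case A : e' ⊆ S
        have he'S : e' ⊆ S := by
          intro v hv
          by_contra hvS
          exact hcase ⟨v, Finset.mem_sdiff.mpr ⟨hv, hvS⟩⟩
        have hval := hz'val M (fun v hv => le_of_eq (hxS v (he'S hv)).symm)
        rw [if_neg (fun hc => hcase hc.2)] at hval
        have hcross : (if (S ∩ e).Nonempty ∧ (e \ S).Nonempty then F (S ∩ e) * (M - a) else 0)
            ≤ F e' * (M - x u) := by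
          by_cases hc : (S ∩ e).Nonempty ∧ (e \ S).Nonempty
          · rw [if_pos hc]
            have huS : u ∉ S := by
              obtain ⟨w, hw⟩ := hc.2
              rw [Finset.mem_sdiff] at hw
              have : w = u := by
                by_contra hne
                exact hw.2 (he'S (Finset.mem_erase.mpr ⟨hne, hw.1⟩))
              exact this ▸ hw.2
            have hSe : S ∩ e = e' := by
              apply Finset.Subset.antisymm
              · intro v hv
                rw [Finset.mem_inter] at hv
                exact Finset.mem_erase.mpr ⟨fun h => huS (h ▸ hv.1), hv.2⟩
              · intro v hv
                exact Finset.mem_inter.mpr ⟨he'S hv, Finset.mem_of_mem_erase hv⟩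
            rw [hSe]
            have h1 : x u ≤ a := hxS' u huS
            have h2 := hnn e'
            nlinarith
          · rw [if_neg hc]
            have h1 : x u ≤ M := hxu
            have h2 := hnn e'
            nlinarith
        have hFe : 0 ≤ F e := hnn e
        nlinarith [mul_le_mul_of_nonneg_left hmxu hFe]

lemma lovasz_meas {N : ℕ} (F : Finset (Fin N) → ℝ) (x : Fin N → ℝ) :
    Measurable (fun t : ℝ => F (Finset.univ.filter fun v => t < x v)) := by
  classical
  have key : (fun t : ℝ => F (Finset.univ.filter fun v => t < x v))
      = fun t => ∑ S ∈ (Finset.univ : Finset (Fin N)).powerset,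
          if S = Finset.univ.filter (fun v => t < x v) then F S else 0 := by
    funext t
    rw [Finset.sum_ite_eq' (Finset.univ : Finset (Fin N)).powerset
      (Finset.univ.filter fun v => t < x v) F,
      if_pos (Finset.mem_powerset.mpr (Finset.filter_subset _ _))]
  rw [key]
  apply Finset.measurable_sum
  intro S _
  have hset : MeasurableSet {t : ℝ | S = Finset.univ.filter fun v => t < x v} := by
    have h1 : {t : ℝ | S = Finset.univ.filter fun v => t < x v}
        = ⋂ v : Fin N, {t : ℝ | v ∈ S ↔ t < x v} := by
      ext t
      simp only [Set.mem_setOf_eq, Set.mem_iInter, Finset.ext_iff, Finset.mem_filter,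
        Finset.mem_univ, true_and]
    rw [h1]
    apply MeasurableSet.iInter
    intro v
    by_cases hv : v ∈ S
    · have h2 : {t : ℝ | v ∈ S ↔ t < x v} = Set.Iio (x v) := by
        ext t; simp [hv]
      rw [h2]; exact measurableSet_Iio
    · have h2 : {t : ℝ | v ∈ S ↔ t < x v} = Set.Ici (x v) := by
        ext t; simp [hv, not_lt]
      rw [h2]; exact measurableSet_Ici
  have h3 : (fun t : ℝ => if S = Finset.univ.filter (fun v => t < x v) then F S else 0)
      = fun t => if t ∈ {t : ℝ | S = Finset.univ.filter fun v => t < x v} then F S else 0 := rfl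
  rw [h3]
  exact Measurable.ite hset measurable_const measurable_const

lemma lovasz_intInt {N : ℕ} (F : Finset (Fin N) → ℝ) (x : Fin N → ℝ)
    (hnn : ∀ T, 0 ≤ F T) (hle : ∀ T, F T ≤ 1) (a b : ℝ) :
    IntervalIntegrable (fun t : ℝ => F (Finset.univ.filter fun v => t < x v)) volume a b := by
  rw [intervalIntegrable_iff]
  apply MeasureTheory.Integrable.mono' (g := fun _ => (1:ℝ))
  · exact integrableOn_const measure_Ioc_lt_top.ne
  · exact (lovasz_meas F x).aestronglyMeasurable
  · refine ae_of_all _ fun t => ?_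
    rw [Real.norm_eq_abs, abs_of_nonneg (hnn _)]
    exact hle _

lemma sum_sgn_split {N : ℕ} (g x : Fin N → ℝ) :
    ∑ v, g v * sgn (x v) = (∑ v ∈ posSupp x, g v) - ∑ v ∈ negSupp x, g v := by
  classical
  rw [← Finset.sum_filter_add_sum_filter_not Finset.univ (fun v => 0 < x v)
    (fun v => g v * sgn (x v))]
  have h1 : ∑ v ∈ Finset.univ.filter (fun v => 0 < x v), g v * sgn (x v)
      = ∑ v ∈ posSupp x, g v := by
    apply Finset.sum_congr rfl
    intro v hv
    have hpos : 0 < x v := (Finset.mem_filter.mp hv).2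
    rw [show sgn (x v) = 1 from if_pos hpos, mul_one]
  have h2 : ∑ v ∈ Finset.univ.filter (fun v => ¬ 0 < x v), g v * sgn (x v)
      = - ∑ v ∈ negSupp x, g v := by
    rw [← Finset.sum_filter_add_sum_filter_not
      (Finset.univ.filter fun v => ¬ 0 < x v) (fun v => x v < 0) (fun v => g v * sgn (x v))]
    have h3 : (Finset.univ.filter fun v : Fin N => ¬ 0 < x v).filter (fun v => x v < 0)
        = negSupp x := by
      rw [Finset.filter_filter]
      apply Finset.filter_congr
      intro v _
      constructor
      · exact fun h => h.2
      · exact fun h => ⟨not_lt.mpr h.le, h⟩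
    have h4 : ∑ v ∈ (Finset.univ.filter fun v : Fin N => ¬ 0 < x v).filter (fun v => ¬ x v < 0),
        g v * sgn (x v) = 0 := by
      apply Finset.sum_eq_zero
      intro v hv
      simp only [Finset.mem_filter] at hv
      have hz : x v = 0 := le_antisymm (not_lt.mp hv.1.2) (not_lt.mp hv.2)
      rw [show sgn (x v) = 0 from by rw [hz]; unfold sgn; norm_num, mul_zero]
    rw [h3, h4, add_zero]
    rw [show (∑ v ∈ negSupp x, g v * sgn (x v)) = ∑ v ∈ negSupp x, -(g v) from
      Finset.sum_congr rfl fun v hv => by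
        have hneg : x v < 0 := (Finset.mem_filter.mp hv).2
        rw [show sgn (x v) = -1 from by unfold sgn; rw [if_neg (by linarith), if_pos hneg]]
        ring]
    rw [Finset.sum_neg_distrib]
  rw [h1, h2]
  ring

end AuxLemmas
/-- For a connected submodular hypergraph and any nonconstant eigenvector
`x` of `△_p`: if `p > 1` then `μ_p^+(x) − μ_p^−(x) = 0`; if `p = 1` then
`|μ₁^+(x) − μ₁^−(x)| ≤ μ⁰(x)`; consequently `c = 0` minimizes `c ↦ ‖x − c·𝟙‖_{ℓp,μ}^p`. -/
theorem stmt8 {N : ℕ} (G : SubmodularHypergraph N) (p : ℝ) (hp : 1 ≤ p)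
    (hG : G.Connected) (lam : ℝ) (x : Fin N → ℝ)
    (hx : G.IsEigenpair p lam x) (hnc : Nonconstant x) :
    (1 < p →
      (∑ v ∈ posSupp x, G.μ v * |x v| ^ (p - 1))
        - (∑ v ∈ negSupp x, G.μ v * |x v| ^ (p - 1)) = 0) ∧
    (p = 1 →
      |(∑ v ∈ posSupp x, G.μ v * |x v| ^ (p - 1))
        - ∑ v ∈ negSupp x, G.μ v * |x v| ^ (p - 1)|
        ≤ ∑ v ∈ Finset.univ.filter (fun v => x v = 0), G.μ v) ∧
    (∀ c : ℝ, ∑ v, G.μ v * |x v| ^ p ≤ ∑ v, G.μ v * |x v - c| ^ p) := by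
  classical
  obtain ⟨hx0, y, hy, heq⟩ := hx
  obtain ⟨u0, w0, hne0⟩ := hnc
  haveI : Nonempty (Fin N) := ⟨u0⟩
  -- the maximum value of x
  obtain ⟨vmax, -, hmax⟩ := Finset.exists_max_image (Finset.univ : Finset (Fin N)) x
    ⟨u0, Finset.mem_univ u0⟩
  set M := x vmax with hMdef
  have hmax' : ∀ v, x v ≤ M := fun v => hmax v (Finset.mem_univ v)
  have hexlt : ∃ v, x v < M := by
    by_contra h
    push_neg at h
    exact hne0 (((le_antisymm (hmax' u0) (h u0))).trans (le_antisymm (hmax' w0) (h w0)).symm)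
  obtain ⟨t0, ht0⟩ := hexlt
  obtain ⟨tmax, htmaxmem, htmax⟩ := Finset.exists_max_image
    (Finset.univ.filter fun v => x v < M) x ⟨t0, by simp [ht0]⟩
  set a := x tmax with hadef
  have haM : a < M := (Finset.mem_filter.mp htmaxmem).2
  set S := Finset.univ.filter (fun v => x v = M) with hSdef
  have hxS : ∀ v ∈ S, x v = M := fun v hv => (Finset.mem_filter.mp hv).2
  have hxS' : ∀ v, v ∉ S → x v ≤ a := by
    intro v hv
    have h1 : x v ≠ M := by simpa [hSdef] using hv
    exact htmax v (by simp [lt_of_le_of_ne (hmax' v) h1])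
  have hSne : S.Nonempty := ⟨vmax, by simp [hSdef, hMdef]⟩
  have hSuniv : S ≠ Finset.univ := by
    intro h
    have h2 : tmax ∈ S := h ▸ Finset.mem_univ tmax
    rw [hSdef, Finset.mem_filter] at h2
    exact absurd h2.2 (ne_of_lt haM)
  have hvol := hG S hSne hSuniv
  -- find a hyperedge cut by S
  have hex : ∃ e ∈ G.E, 0 < G.θ e * G.w e S := by
    by_contra h
    push_neg at h
    have h2 : G.volB S ≤ 0 := Finset.sum_nonpos h
    unfold SubmodularHypergraph.volB at hvol
    unfold SubmodularHypergraph.volB at h2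
    linarith
  obtain ⟨estar, heE, hprod⟩ := hex
  have hθ := G.θ_pos estar heE
  have hwS : 0 < G.w estar S := by nlinarith
  -- the greedy vector
  obtain ⟨z, hz0, hzle, hzsum, hzval⟩ := greedy (G.w estar) (G.w_submodular estar heE)
    (G.w_empty estar heE) (G.w_nonneg estar heE) x S M a hxS hxS' haM.le estar
  have hwe : G.w estar estar = 0 := by
    have h1 := G.w_symm estar heE ∅ (Finset.empty_subset estar)
    rw [Finset.sdiff_empty] at h1
    rw [← h1, G.w_empty estar heE]
  have hwinter : G.w estar S = G.w estar (S ∩ estar) := G.w_inter estar heE S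
  have hSee : (S ∩ estar).Nonempty := by
    rcases Finset.eq_empty_or_nonempty (S ∩ estar) with h | h
    · rw [hwinter, h, G.w_empty estar heE] at hwS; exact absurd hwS (lt_irrefl 0)
    · exact h
  have heSe : (estar \ S).Nonempty := by
    rcases Finset.eq_empty_or_nonempty (estar \ S) with h | h
    · have hsub : estar ⊆ S := Finset.sdiff_eq_empty_iff_subset.mp h
      have h2 : S ∩ estar = estar := Finset.inter_eq_right.mpr hsub
      rw [hwinter, h2, hwe] at hwS
      exact absurd hwS (lt_irrefl 0)
    · exact h
  obtain ⟨vmin, -, hmin⟩ := Finset.exists_min_image (Finset.univ : Finset (Fin N)) x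
    ⟨u0, Finset.mem_univ u0⟩
  have hzx : 0 < ∑ v, z v * x v := by
    have h := hzval (x vmin) (fun v _ => hmin v (Finset.mem_univ v))
    rw [if_pos ⟨hSee, heSe⟩, hwe, zero_mul, add_zero, ← hwinter] at h
    calc (0:ℝ) < G.w estar S * (M - a) := mul_pos hwS (by linarith)
      _ ≤ _ := h
  have hzbase : z ∈ basePolytope (G.w estar) := by
    constructor
    · intro T
      have hsub2 : ∑ v ∈ T, z v = ∑ v ∈ T ∩ estar, z v := by
        symm
        apply Finset.sum_subset Finset.inter_subset_left
        intro v hv hv2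
        exact hz0 v (fun h => hv2 (Finset.mem_inter.mpr ⟨hv, h⟩))
      rw [hsub2, G.w_inter estar heE T]
      exact hzle _ Finset.inter_subset_right
    · have h1 : ∑ v, z v = ∑ v ∈ estar, z v := by
        symm
        apply Finset.sum_subset (Finset.subset_univ estar)
        intro v _ hv2
        exact hz0 v hv2
      rw [h1, hzsum, hwe]
  have hymax := (hy estar heE).2 z hzbase
  have hdotpos : 0 < dotp (y estar) x := lt_of_lt_of_le hzx hymax
  have hynn : ∀ e ∈ G.E, 0 ≤ dotp (y e) x := by
    intro e he
    have h0mem : (0 : Fin N → ℝ) ∈ basePolytope (G.w e) := by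
      constructor
      · intro T; simpa using G.w_nonneg e he T
      · simp
    have h1 := (hy e he).2 0 h0mem
    have h2 : dotp (0 : Fin N → ℝ) x = 0 := by unfold dotp; simp
    linarith
  -- Lovász extension facts
  have hbddA : BddAbove (Set.range x) := (Set.finite_range x).bddAbove
  have hbddB : BddBelow (Set.range x) := (Set.finite_range x).bddBelow
  have hiSup : (⨆ v, x v) = M := le_antisymm (ciSup_le hmax') (le_ciSup hbddA vmax)
  have hiInfle : (⨅ v, x v) ≤ a := ciInf_le hbddB tmax
  have hinfsup : (⨅ v, x v) ≤ (⨆ v, x v) :=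
    le_trans (ciInf_le hbddB u0) (le_ciSup hbddA u0)
  have hfnn : ∀ e ∈ G.E, 0 ≤ G.fe e x := by
    intro e he
    show (0:ℝ) ≤ lovasz (G.w e) x
    unfold lovasz
    exact intervalIntegral.integral_nonneg hinfsup (fun u _ => G.w_nonneg e he _)
  have hfpos : 0 < G.fe estar x := by
    set M' := (a + M)/2 with hM'def
    have h1 : a < M' := by rw [hM'def]; linarith
    have h2 : M' < M := by rw [hM'def]; linarith
    set g := fun t : ℝ => G.w estar (Finset.univ.filter fun v => t < x v) with hgdef
    have hEq : Set.EqOn g (fun _ => G.w estar S) (Set.uIcc a M') := by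
      intro t ht
      rw [Set.uIcc_of_le h1.le] at ht
      obtain ⟨hta, htM'⟩ := ht
      show G.w estar _ = G.w estar S
      congr 1
      ext v
      simp only [Finset.mem_filter, Finset.mem_univ, true_and, hSdef]
      constructor
      · intro hlt
        by_contra hvM
        have h3 : x v ≤ a := hxS' v (by simp [hSdef, hvM])
        linarith
      · intro hvM
        rw [hvM]
        linarith
    have hint : ∫ t in a..M', g t = (M' - a) * G.w estar S := by
      rw [intervalIntegral.integral_congr hEq, intervalIntegral.integral_const, smul_eq_mul]
    have hII := lovasz_intInt (G.w estar) x (G.w_nonneg estar heE) (G.w_le_one estar heE)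
      (⨅ v, x v) (⨆ v, x v)
    have hmono : ∫ t in a..M', g t ≤ ∫ t in (⨅ v, x v)..(⨆ v, x v), g t :=
      intervalIntegral.integral_mono_interval hiInfle h1.le (by rw [hiSup]; exact h2.le)
        (Filter.Eventually.of_forall fun t => G.w_nonneg estar heE _) hII
    show (0:ℝ) < lovasz (G.w estar) x
    unfold lovasz
    calc (0:ℝ) < (M' - a) * G.w estar S := mul_pos (by linarith) hwS
      _ = ∫ t in a..M', g t := hint.symm
      _ ≤ _ := hmono
  -- the key facts
  have key1 : 1 < p →
      (∑ v ∈ posSupp x, G.μ v * |x v| ^ (p - 1))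
        - (∑ v ∈ negSupp x, G.μ v * |x v| ^ (p - 1)) = 0 := by
    intro hp1
    rw [if_pos hp1] at heq
    -- lam is positive
    have hA : ∑ e ∈ G.E, G.θ e * G.fe e x ^ (p-1) * dotp (y e) x
        = lam * ∑ v, G.μ v * |x v| ^ p := by
      have h1 : ∀ e ∈ G.E, G.θ e * G.fe e x ^ (p-1) * dotp (y e) x
          = ∑ v, G.θ e * G.fe e x ^ (p-1) * y e v * x v := by
        intro e _
        unfold dotp
        rw [Finset.mul_sum]
        exact Finset.sum_congr rfl fun v _ => by ring
      rw [Finset.sum_congr rfl h1, Finset.sum_comm]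
      have h2 : ∀ v : Fin N, ∑ e ∈ G.E, G.θ e * G.fe e x ^ (p-1) * y e v * x v
          = lam * (G.μ v * |x v| ^ p) := by
        intro v
        rw [← Finset.sum_mul, heq v]
        by_cases hxv : x v = 0
        · rw [hxv]
          simp [sgn, Real.zero_rpow (show p ≠ 0 by linarith)]
        · have h3 : |x v| ^ (p - 1) * sgn (x v) * x v = |x v| ^ p := by
            rw [mul_assoc, sgn_mul_self, ← Real.rpow_add_one (abs_ne_zero.mpr hxv) (p-1),
              sub_add_cancel]
          calc lam * G.μ v * (|x v| ^ (p-1) * sgn (x v)) * x v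
              = lam * (G.μ v * (|x v| ^ (p-1) * sgn (x v) * x v)) := by ring
            _ = lam * (G.μ v * |x v| ^ p) := by rw [h3]
      rw [Finset.sum_congr rfl fun v _ => h2 v, ← Finset.mul_sum]
    have hLpos : 0 < ∑ e ∈ G.E, G.θ e * G.fe e x ^ (p-1) * dotp (y e) x := by
      apply Finset.sum_pos'
      · intro e he
        exact mul_nonneg (mul_nonneg (G.θ_pos e he).le (Real.rpow_nonneg (hfnn e he) _))
          (hynn e he)
      · exact ⟨estar, heE, mul_pos (mul_pos hθ (Real.rpow_pos_of_pos hfpos _)) hdotpos⟩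
    have hXpos : 0 < ∑ v, G.μ v * |x v| ^ p := by
      obtain ⟨v1, hv1⟩ : ∃ v, x v ≠ 0 := Function.ne_iff.mp hx0
      apply Finset.sum_pos'
      · intro v _
        exact mul_nonneg (G.μ_pos v).le (Real.rpow_nonneg (abs_nonneg _) _)
      · exact ⟨v1, Finset.mem_univ v1,
          mul_pos (G.μ_pos v1) (Real.rpow_pos_of_pos (abs_pos.mpr hv1) _)⟩
    have hlam : 0 < lam := by
      by_contra h
      push_neg at h
      nlinarith
    -- summing the eigenvalue equation over all vertices
    have h1 : ∑ v, ∑ e ∈ G.E, G.θ e * G.fe e x ^ (p-1) * y e v = 0 := by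
      rw [Finset.sum_comm]
      apply Finset.sum_eq_zero
      intro e he
      rw [← Finset.mul_sum, (hy e he).1.2, mul_zero]
    rw [Finset.sum_congr rfl fun v _ => heq v] at h1
    have h2 : ∑ v, lam * G.μ v * (|x v| ^ (p-1) * sgn (x v))
        = lam * ∑ v, (G.μ v * |x v| ^ (p-1)) * sgn (x v) := by
      rw [Finset.mul_sum]
      exact Finset.sum_congr rfl fun v _ => by ring
    rw [h2, sum_sgn_split (fun v => G.μ v * |x v| ^ (p-1)) x] at h1
    rcases mul_eq_zero.mp h1 with h | h
    · exact absurd h (ne_of_gt hlam)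
    · exact h
  have key2 : p = 1 →
      |(∑ v ∈ posSupp x, G.μ v * |x v| ^ (p - 1))
        - ∑ v ∈ negSupp x, G.μ v * |x v| ^ (p - 1)|
        ≤ ∑ v ∈ Finset.univ.filter (fun v => x v = 0), G.μ v := by
    intro hp1
    subst hp1
    rw [if_neg (lt_irrefl 1)] at heq
    obtain ⟨heq1, heq2⟩ := heq
    -- lam is positive
    have hA : ∑ e ∈ G.E, G.θ e * dotp (y e) x = lam * ∑ v, G.μ v * |x v| := by
      have h1 : ∀ e ∈ G.E, G.θ e * dotp (y e) x = ∑ v, G.θ e * y e v * x v := by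
        intro e _
        unfold dotp
        rw [Finset.mul_sum]
        exact Finset.sum_congr rfl fun v _ => by ring
      rw [Finset.sum_congr rfl h1, Finset.sum_comm]
      have h2 : ∀ v : Fin N, ∑ e ∈ G.E, G.θ e * y e v * x v = lam * (G.μ v * |x v|) := by
        intro v
        rw [← Finset.sum_mul]
        by_cases hxv : x v = 0
        · rw [hxv]; simp
        · rw [heq1 v hxv]
          calc lam * G.μ v * sgn (x v) * x v = lam * (G.μ v * (sgn (x v) * x v)) := by ring
            _ = lam * (G.μ v * |x v|) := by rw [sgn_mul_self]
      rw [Finset.sum_congr rfl fun v _ => h2 v, ← Finset.mul_sum]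
    have hLpos : 0 < ∑ e ∈ G.E, G.θ e * dotp (y e) x := by
      apply Finset.sum_pos'
      · intro e he
        exact mul_nonneg (G.θ_pos e he).le (hynn e he)
      · exact ⟨estar, heE, mul_pos hθ hdotpos⟩
    have hXpos : 0 < ∑ v, G.μ v * |x v| := by
      obtain ⟨v1, hv1⟩ : ∃ v, x v ≠ 0 := Function.ne_iff.mp hx0
      apply Finset.sum_pos'
      · intro v _
        exact mul_nonneg (G.μ_pos v).le (abs_nonneg _)
      · exact ⟨v1, Finset.mem_univ v1, mul_pos (G.μ_pos v1) (abs_pos.mpr hv1)⟩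
    have hlam : 0 < lam := by
      by_contra h
      push_neg at h
      nlinarith
    -- summing over all vertices
    have htot : ∑ v, ∑ e ∈ G.E, G.θ e * y e v = 0 := by
      rw [Finset.sum_comm]
      apply Finset.sum_eq_zero
      intro e he
      rw [← Finset.mul_sum, (hy e he).1.2, mul_zero]
    have hsplit := Finset.sum_filter_add_sum_filter_not Finset.univ (fun v => x v = 0)
      (fun v => ∑ e ∈ G.E, G.θ e * y e v)
    have hnz : ∑ v ∈ Finset.univ.filter (fun v => ¬ x v = 0), ∑ e ∈ G.E, G.θ e * y e v
        = lam * ((∑ v ∈ posSupp x, G.μ v) - ∑ v ∈ negSupp x, G.μ v) := by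
      have h1 : ∀ v ∈ Finset.univ.filter (fun v => ¬ x v = 0),
          ∑ e ∈ G.E, G.θ e * y e v = lam * (G.μ v * sgn (x v)) := by
        intro v hv
        rw [heq1 v (by simpa using hv)]
        ring
      rw [Finset.sum_congr rfl h1, ← Finset.mul_sum]
      congr 1
      rw [← sum_sgn_split (fun v => G.μ v) x]
      apply Finset.sum_subset (Finset.filter_subset _ _)
      intro v _ hv
      have hz : x v = 0 := by simpa using hv
      rw [hz, show sgn 0 = (0:ℝ) from by unfold sgn; norm_num, mul_zero]
    have hcomb : lam * ((∑ v ∈ posSupp x, G.μ v) - ∑ v ∈ negSupp x, G.μ v)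
        = - ∑ v ∈ Finset.univ.filter (fun v => x v = 0), ∑ e ∈ G.E, G.θ e * y e v := by
      rw [← hnz]; linarith
    have habs : |lam * ((∑ v ∈ posSupp x, G.μ v) - ∑ v ∈ negSupp x, G.μ v)|
        ≤ lam * ∑ v ∈ Finset.univ.filter (fun v => x v = 0), G.μ v := by
      rw [hcomb, abs_neg]
      calc |∑ v ∈ Finset.univ.filter (fun v => x v = 0), ∑ e ∈ G.E, G.θ e * y e v|
          ≤ ∑ v ∈ Finset.univ.filter (fun v => x v = 0), |∑ e ∈ G.E, G.θ e * y e v| :=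
            Finset.abs_sum_le_sum_abs _ _
        _ ≤ ∑ v ∈ Finset.univ.filter (fun v => x v = 0), lam * G.μ v :=
            Finset.sum_le_sum fun v hv => heq2 v (by simpa using hv)
        _ = lam * ∑ v ∈ Finset.univ.filter (fun v => x v = 0), G.μ v :=
            (Finset.mul_sum _ _ _).symm
    rw [abs_mul, abs_of_pos hlam] at habs
    have hfin := (mul_le_mul_iff_right₀ hlam).mp habs
    simpa [Real.rpow_zero] using hfin
  refine ⟨key1, key2, ?_⟩
  -- the minimization property
  intro c
  rcases eq_or_lt_of_le hp with hp1 | hp1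
  · -- p = 1
    have hK := key2 hp1.symm
    subst hp1
    simp only [sub_self, Real.rpow_zero, mul_one] at hK
    simp only [Real.rpow_one]
    have hsplit1 : ∑ v, G.μ v * |x v|
        = ∑ v ∈ Finset.univ.filter (fun v => ¬ x v = 0), G.μ v * |x v| := by
      rw [← Finset.sum_filter_add_sum_filter_not Finset.univ (fun v => x v = 0)
        (fun v => G.μ v * |x v|)]
      have : ∑ v ∈ Finset.univ.filter (fun v => x v = 0), G.μ v * |x v| = 0 := by
        apply Finset.sum_eq_zero
        intro v hv
        have hz : x v = 0 := by simpa using hv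
        rw [hz]; simp
      rw [this, zero_add]
    have hsplit2 : ∑ v, G.μ v * |x v - c|
        = (∑ v ∈ Finset.univ.filter (fun v => ¬ x v = 0), G.μ v * |x v - c|)
          + |c| * ∑ v ∈ Finset.univ.filter (fun v => x v = 0), G.μ v := by
      rw [← Finset.sum_filter_add_sum_filter_not Finset.univ (fun v => x v = 0)
        (fun v => G.μ v * |x v - c|)]
      have h1 : ∑ v ∈ Finset.univ.filter (fun v => x v = 0), G.μ v * |x v - c|
          = |c| * ∑ v ∈ Finset.univ.filter (fun v => x v = 0), G.μ v := by
        rw [Finset.mul_sum]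
        apply Finset.sum_congr rfl
        intro v hv
        have hz : x v = 0 := by simpa using hv
        rw [hz, zero_sub, abs_neg]
        ring
      rw [h1]
      ring
    have hsgnZc : ∑ v ∈ Finset.univ.filter (fun v => ¬ x v = 0), G.μ v * sgn (x v)
        = (∑ v ∈ posSupp x, G.μ v) - ∑ v ∈ negSupp x, G.μ v := by
      rw [← sum_sgn_split (fun v => G.μ v) x]
      apply Finset.sum_subset (Finset.filter_subset _ _)
      intro v _ hv
      have hz : x v = 0 := by simpa using hv
      rw [hz, show sgn 0 = (0:ℝ) from by unfold sgn; norm_num, mul_zero]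
    have hmain : ∑ v ∈ Finset.univ.filter (fun v => ¬ x v = 0), G.μ v * |x v|
        ≤ (∑ v ∈ Finset.univ.filter (fun v => ¬ x v = 0), G.μ v * |x v - c|)
          + c * ∑ v ∈ Finset.univ.filter (fun v => ¬ x v = 0), G.μ v * sgn (x v) := by
      rw [Finset.mul_sum, ← Finset.sum_add_distrib]
      apply Finset.sum_le_sum
      intro v _
      have h1 : sgn (x v) * (x v - c) ≤ |x v - c| := sgn_mul_le_abs _ _
      have h2 : sgn (x v) * x v = |x v| := sgn_mul_self _
      have h3 : |x v| ≤ |x v - c| + sgn (x v) * c := by nlinarith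
      have h4 := (G.μ_pos v).le
      calc G.μ v * |x v| ≤ G.μ v * (|x v - c| + sgn (x v) * c) :=
            mul_le_mul_of_nonneg_left h3 h4
        _ = G.μ v * |x v - c| + c * (G.μ v * sgn (x v)) := by ring
    have hcbound : c * ((∑ v ∈ posSupp x, G.μ v) - ∑ v ∈ negSupp x, G.μ v)
        ≤ |c| * ∑ v ∈ Finset.univ.filter (fun v => x v = 0), G.μ v := by
      calc c * ((∑ v ∈ posSupp x, G.μ v) - ∑ v ∈ negSupp x, G.μ v)
          ≤ |c * ((∑ v ∈ posSupp x, G.μ v) - ∑ v ∈ negSupp x, G.μ v)| := le_abs_self _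
        _ = |c| * |(∑ v ∈ posSupp x, G.μ v) - ∑ v ∈ negSupp x, G.μ v| := abs_mul _ _
        _ ≤ |c| * ∑ v ∈ Finset.univ.filter (fun v => x v = 0), G.μ v :=
            mul_le_mul_of_nonneg_left hK (abs_nonneg c)
    rw [hsplit1, hsplit2]
    rw [hsgnZc] at hmain
    linarith
  · -- p > 1
    have hD := key1 hp1
    have hDsum : ∑ v, (G.μ v * |x v| ^ (p-1)) * sgn (x v) = 0 := by
      rw [sum_sgn_split (fun v => G.μ v * |x v| ^ (p-1)) x]
      exact hD
    have hstep : ∑ v, G.μ v * |x v| ^ p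
        = ∑ v, G.μ v * (|x v| ^ p - p * c * (|x v| ^ (p - 1) * sgn (x v))) := by
      have expand : ∀ v : Fin N, G.μ v * (|x v| ^ p - p * c * (|x v| ^ (p - 1) * sgn (x v)))
          = G.μ v * |x v| ^ p - p * c * ((G.μ v * |x v| ^ (p - 1)) * sgn (x v)) := fun v => by
        ring
      rw [Finset.sum_congr rfl fun v _ => expand v, Finset.sum_sub_distrib,
        ← Finset.mul_sum, hDsum, mul_zero, sub_zero]
    rw [hstep]
    apply Finset.sum_le_sum
    intro v _
    exact mul_le_mul_of_nonneg_left (bern hp1 (x v) c) (G.μ_pos v).le
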